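/- If a random vector X is positively orthant dependent, then the random vector U following its checkerboard copula is positively orthant dependent. -/

import Mathlib

open MeasureTheory ProbabilityTheory

open Set
open scoped ENNReal

lemma aux_prod_iSup_le {ι : Type*} (s : Finset ι) (f : ι → ℕ → ℝ≥0∞)
    (hf : ∀ i, Monotone (f i)) :
    (∏ i ∈ s, ⨆ n, f i n) ≤ ⨆ n, ∏ i ∈ s, f i n := by
  classical
  induction s using Finset.induction with
  | empty => simp
  | @insert a s h ih =>
    rw [Finset.prod_insert h]
    calc (⨆ n, f a n) * ∏ i ∈ s, ⨆ n, f i n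
        ≤ (⨆ n, f a n) * ⨆ m, ∏ i ∈ s, f i m := mul_le_mul_right ih _
      _ = ⨆ n, ⨆ m, f a n * ∏ i ∈ s, f i m := by
          rw [ENNReal.iSup_mul]; simp_rw [ENNReal.mul_iSup]
      _ ≤ ⨆ k, ∏ i ∈ insert a s, f i k := by
          refine iSup_le fun n => iSup_le fun m => ?_
          refine le_trans ?_ (le_iSup _ (max n m))
          rw [Finset.prod_insert h]
          exact mul_le_mul' (hf a (le_max_left n m))
            (Finset.prod_le_prod' fun i _ => hf i (le_max_right n m))

lemma aux_lower_seq {A : Set ℝ} (hA : IsLowerSet A) (hne : A.Nonempty) :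
    ∃ c : ℕ → ℝ, Monotone c ∧ A = ⋃ n, Iic (c n) := by
  by_cases hbdd : BddAbove A
  · by_cases hsA : sSup A ∈ A
    · refine ⟨fun _ => sSup A, monotone_const, ?_⟩
      rw [iUnion_const]
      ext x
      exact ⟨fun hx => le_csSup hbdd hx, fun hx => hA hx hsA⟩
    · refine ⟨fun n => sSup A - 1 / (n + 1), ?_, ?_⟩
      · intro n m hnm
        have h1 : (1:ℝ) / (m + 1) ≤ 1 / (n + 1) := by
          apply one_div_le_one_div_of_le <;> [positivity; exact_mod_cast by omega]
        linarith
      · have hAeq : A = Iio (sSup A) := by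
          ext x
          constructor
          · intro hx
            refine lt_of_le_of_ne (le_csSup hbdd hx) fun h => hsA ?_
            rw [← h]; exact hx
          · intro hx
            obtain ⟨a, haA, hxa⟩ := exists_lt_of_lt_csSup hne hx
            exact hA hxa.le haA
        nth_rewrite 1 [hAeq]
        ext x
        simp only [mem_Iio, mem_iUnion, mem_Iic]
        constructor
        · intro hx
          obtain ⟨n, hn⟩ := exists_nat_one_div_lt (sub_pos.2 hx)
          exact ⟨n, by linarith⟩
        · rintro ⟨n, hn⟩
          have : (0:ℝ) < 1 / (n + 1 : ℝ) := by positivity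
          linarith
  · refine ⟨fun n => n, fun n m h => by simpa using (Nat.cast_le.2 h : (n:ℝ) ≤ m), ?_⟩
    have hall : ∀ x : ℝ, x ∈ A := by
      intro x
      obtain ⟨a, haA, hxa⟩ := not_bddAbove_iff.1 hbdd x
      exact hA hxa.le haA
    ext x
    simp only [mem_iUnion, mem_Iic]
    refine ⟨fun _ => ?_, fun _ => hall x⟩
    obtain ⟨n, hn⟩ := exists_nat_ge x
    exact ⟨n, hn⟩

lemma aux_upper_seq {A : Set ℝ} (hA : IsUpperSet A) (hne : A.Nonempty) (hbdd : BddBelow A) :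
    ∃ c : ℕ → ℝ, Monotone c ∧ (∀ m, A ⊆ Ioi (c m)) ∧ A = ⋂ m, Ioi (c m) := by
  by_cases hsA : sInf A ∈ A
  · have hAeq : A = Ici (sInf A) := by
      ext x
      exact ⟨fun hx => csInf_le hbdd hx, fun hx => hA hx hsA⟩
    refine ⟨fun m => sInf A - 1 / (m + 1), ?_, ?_, ?_⟩
    · intro n m hnm
      have h1 : (1:ℝ) / (m + 1) ≤ 1 / (n + 1) := by
        apply one_div_le_one_div_of_le <;> [positivity; exact_mod_cast by omega]
      linarith
    · intro m x hx
      have h1 : (0:ℝ) < 1 / (m + 1 : ℝ) := by positivity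
      have h2 := csInf_le hbdd hx
      simp only [mem_Ioi]
      linarith
    · nth_rewrite 1 [hAeq]
      ext x
      simp only [mem_Ici, mem_iInter, mem_Ioi]
      constructor
      · intro hx m
        have h1 : (0:ℝ) < 1 / (m + 1 : ℝ) := by positivity
        linarith
      · intro h
        by_contra hc
        push_neg at hc
        obtain ⟨m, hm⟩ := exists_nat_one_div_lt (sub_pos.2 hc)
        have := h m
        linarith
  · have hAeq : A = Ioi (sInf A) := by
      ext x
      constructor
      · intro hx
        refine lt_of_le_of_ne (csInf_le hbdd hx) fun h => hsA ?_
        rw [h]; exact hx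
      · intro hx
        obtain ⟨a, haA, hxa⟩ := exists_lt_of_csInf_lt hne hx
        exact hA hxa.le haA
    exact ⟨fun _ => sInf A, monotone_const, fun m => hAeq.le, by rw [iInter_const]; exact hAeq⟩

lemma aux_pod_lower {Ω : Type*} [MeasurableSpace Ω] (P : Measure Ω) [IsProbabilityMeasure P]
    {d : ℕ} (X : Fin d → Ω → ℝ)
    (hpod : ∀ c : Fin d → ℝ, (∏ i, P {ω | X i ω ≤ c i}) ≤ P {ω | ∀ i, X i ω ≤ c i})
    (A : Fin d → Set ℝ) (hA : ∀ i, IsLowerSet (A i)) :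
    (∏ i, P {ω | X i ω ∈ A i}) ≤ P {ω | ∀ i, X i ω ∈ A i} := by
  by_cases hne : ∀ i, (A i).Nonempty
  · choose c hcmono hceq using fun i => aux_lower_seq (hA i) (hne i)
    have hsetmono : ∀ i, Monotone fun n => {ω | X i ω ≤ c i n} := by
      intro i n m hnm ω hω
      exact le_trans hω (hcmono i hnm)
    have hjointmono : Monotone fun n => {ω | ∀ i, X i ω ≤ c i n} := by
      intro n m hnm ω hω i
      exact le_trans (hω i) (hcmono i hnm)
    have hkey : ∀ i, {ω | X i ω ∈ A i} = ⋃ n, {ω | X i ω ≤ c i n} := by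
      intro i
      ext ω
      simp only [mem_setOf_eq, hceq i, mem_iUnion, mem_Iic]
    have hjoint : {ω | ∀ i, X i ω ∈ A i} = ⋃ n, {ω | ∀ i, X i ω ≤ c i n} := by
      ext ω
      simp only [mem_setOf_eq, hceq, mem_iUnion, mem_Iic]
      constructor
      · intro h
        choose g hg using h
        exact ⟨Finset.univ.sup g, fun i =>
          (hg i).trans (hcmono i (Finset.le_sup (Finset.mem_univ i)))⟩
      · rintro ⟨n, h⟩ i
        exact ⟨n, h i⟩
    calc (∏ i, P {ω | X i ω ∈ A i})
        = ∏ i, ⨆ n, P {ω | X i ω ≤ c i n} := by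
          refine Finset.prod_congr rfl fun i _ => ?_
          rw [hkey i, (hsetmono i).directed_le.measure_iUnion]
      _ ≤ ⨆ n, ∏ i, P {ω | X i ω ≤ c i n} :=
          aux_prod_iSup_le _ _ fun i n m hnm => measure_mono (hsetmono i hnm)
      _ ≤ ⨆ n, P {ω | ∀ i, X i ω ≤ c i n} := iSup_mono fun n => hpod fun i => c i n
      _ = P {ω | ∀ i, X i ω ∈ A i} := by
          rw [hjoint, hjointmono.directed_le.measure_iUnion]
  · push_neg at hne
    obtain ⟨i, hi⟩ := hne
    have : P {ω | X i ω ∈ A i} = 0 := by simp [hi]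
    rw [Finset.prod_eq_zero (Finset.mem_univ i) this]
    exact zero_le

lemma aux_pod_upper {Ω : Type*} [MeasurableSpace Ω] (P : Measure Ω) [IsProbabilityMeasure P]
    {d : ℕ} (X : Fin d → Ω → ℝ) (hXm : ∀ i, Measurable (X i))
    (hpod : ∀ c : Fin d → ℝ, (∏ i, P {ω | c i < X i ω}) ≤ P {ω | ∀ i, c i < X i ω})
    (A : Fin d → Set ℝ) (hA : ∀ i, IsUpperSet (A i)) :
    (∏ i, P {ω | X i ω ∈ A i}) ≤ P {ω | ∀ i, X i ω ∈ A i} := by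
  by_cases hne : ∀ i, (A i).Nonempty
  · set B : Fin d → ℕ → Set ℝ := fun i n => A i ∩ Ioi (-(n : ℝ)) with hB
    have hBmono : ∀ i, Monotone (B i) := by
      intro i n m hnm
      refine inter_subset_inter le_rfl (Ioi_subset_Ioi ?_)
      simp only [neg_le_neg_iff, Nat.cast_le]
      exact_mod_cast hnm
    have hBne : ∀ i n, (B i n).Nonempty := by
      intro i n
      obtain ⟨a, ha⟩ := hne i
      refine ⟨max a (-(n:ℝ) + 1), hA i (le_max_left _ _) ha, ?_⟩
      simp only [mem_Ioi]
      have : (-(n:ℝ) + 1) ≤ max a (-(n:ℝ) + 1) := le_max_right _ _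
      linarith
    have hBupper : ∀ i n, IsUpperSet (B i n) := fun i n =>
      (hA i).inter (isUpperSet_Ioi _)
    have hBbdd : ∀ i n, BddBelow (B i n) := fun i n =>
      ⟨-(n:ℝ), fun x hx => le_of_lt hx.2⟩
    -- coordinatewise continuity from below
    have hstep2 : ∀ i, {ω | X i ω ∈ A i} = ⋃ n, {ω | X i ω ∈ B i n} := by
      intro i
      ext ω
      simp only [mem_setOf_eq, mem_iUnion, hB, mem_inter_iff, mem_Ioi]
      constructor
      · intro h
        obtain ⟨n, hn⟩ := exists_nat_gt (-(X i ω))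
        exact ⟨n, h, by linarith⟩
      · rintro ⟨n, h, _⟩
        exact h
    have hstep1 : {ω | ∀ i, X i ω ∈ A i} = ⋃ n, {ω | ∀ i, X i ω ∈ B i n} := by
      ext ω
      simp only [mem_setOf_eq, mem_iUnion, hB, mem_inter_iff, mem_Ioi]
      constructor
      · intro h
        have h2 : ∀ i, ∃ n : ℕ, -(n:ℝ) < X i ω := by
          intro i
          obtain ⟨n, hn⟩ := exists_nat_gt (-(X i ω))
          exact ⟨n, by linarith⟩
        choose g hg using h2
        refine ⟨Finset.univ.sup g, fun i => ⟨h i, lt_of_le_of_lt ?_ (hg i)⟩⟩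
        simp only [neg_le_neg_iff, Nat.cast_le]
        exact_mod_cast Finset.le_sup (Finset.mem_univ i)
      · rintro ⟨n, h⟩ i
        exact (h i).1
    -- fixed n claim
    have hclaim : ∀ n, (∏ i, P {ω | X i ω ∈ B i n}) ≤ P {ω | ∀ i, X i ω ∈ B i n} := by
      intro n
      choose c hcmono hcsub hceq using fun i =>
        aux_upper_seq (hBupper i n) (hBne i n) (hBbdd i n)
      have hEeq : {ω | ∀ i, X i ω ∈ B i n} = ⋂ m, {ω | ∀ i, c i m < X i ω} := by
        ext ω
        simp only [mem_setOf_eq, mem_iInter]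
        constructor
        · intro h m i
          have := h i
          rw [hceq i] at this
          simpa using mem_iInter.1 this m
        · intro h i
          rw [hceq i]
          exact mem_iInter.2 fun m => h m i
      have hanti : Antitone fun m => {ω | ∀ i, c i m < X i ω} := by
        intro m m' hmm ω hω i
        exact lt_of_le_of_lt (hcmono i hmm) (hω i)
      have hmeas : ∀ m, NullMeasurableSet {ω | ∀ i, c i m < X i ω} P := by
        intro m
        have hss : {ω | ∀ i, c i m < X i ω} = ⋂ i, {ω | c i m < X i ω} :=
          Set.setOf_forall _
        rw [hss]
        exact (MeasurableSet.iInter fun i =>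
          measurableSet_lt measurable_const (hXm i)).nullMeasurableSet
      rw [hEeq, Directed.measure_iInter (fun m => hmeas m) hanti.directed_ge
        ⟨0, measure_ne_top P _⟩]
      refine le_iInf fun m => ?_
      refine le_trans ?_ (hpod fun i => c i m)
      exact Finset.prod_le_prod' fun i _ => measure_mono fun ω hω => hcsub i m hω
    calc (∏ i, P {ω | X i ω ∈ A i})
        = ∏ i, ⨆ n, P {ω | X i ω ∈ B i n} := by
          refine Finset.prod_congr rfl fun i _ => ?_
          have hm1 : Monotone fun n => {ω | X i ω ∈ B i n} :=
            fun n m hnm ω hω => hBmono i hnm hω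
          rw [hstep2 i, hm1.directed_le.measure_iUnion]
      _ ≤ ⨆ n, ∏ i, P {ω | X i ω ∈ B i n} :=
          aux_prod_iSup_le _ _ fun i n m hnm => measure_mono fun ω hω => hBmono i hnm hω
      _ ≤ ⨆ n, P {ω | ∀ i, X i ω ∈ B i n} := iSup_mono hclaim
      _ = P {ω | ∀ i, X i ω ∈ A i} := by
          have hm2 : Monotone fun n => {ω | ∀ i, X i ω ∈ B i n} :=
            fun n m hnm ω hω i => hBmono i hnm (hω i)
          rw [hstep1, hm2.directed_le.measure_iUnion]
  · push_neg at hne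
    obtain ⟨i, hi⟩ := hne
    have : P {ω | X i ω ∈ A i} = 0 := by simp [hi]
    rw [Finset.prod_eq_zero 
(Finset.mem_univ i) this]
    exact zero_le

lemma aux_lintegral_pi_prod : ∀ {d : ℕ} (m : Fin d → Measure ℝ)
    [∀ i, IsProbabilityMeasure (m i)] (q : Fin d → ℝ → ℝ≥0∞)
    (_ : ∀ i, Measurable (q i)),
    ∫⁻ v, ∏ i, q i (v i) ∂(Measure.pi m) = ∏ i, ∫⁻ t, q i t ∂(m i) := by
  intro d
  induction d with
  | zero =>
    intro m _ q hq
    simp only [Finset.univ_eq_empty, Finset.prod_empty, lintegral_one, measure_univ]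
  | succ d ih =>
    intro m _ q hq
    have hmp := measurePreserving_piFinSuccAbove m 0
    set e := MeasurableEquiv.piFinSuccAbove (fun _ : Fin (d + 1) => ℝ) 0 with he
    have hg : Measurable fun p : ℝ × (Fin d → ℝ) =>
        q 0 p.1 * ∏ j, q (Fin.succAbove 0 j) (p.2 j) := by
      refine Measurable.mul ((hq 0).comp measurable_fst) ?_
      refine Finset.measurable_prod _ fun j _ => ?_
      exact (hq _).comp ((measurable_pi_apply j).comp measurable_snd)
    have h1 : ∫⁻ v, ∏ i, q i (v i) ∂(Measure.pi m)
        = ∫⁻ p, q 0 p.1 * ∏ j, q (Fin.succAbove 0 j) (p.2 j)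
            ∂((m 0).prod (Measure.pi fun j => m (Fin.succAbove 0 j))) := by
      rw [← hmp.lintegral_comp hg]
      congr 1
      ext v
      have hev : e v = (v 0, fun j => v (Fin.succAbove 0 j)) := rfl
      rw [hev]
      dsimp only
      exact Fin.prod_univ_succAbove (fun i => q i (v i)) 0
    rw [h1, lintegral_prod_mul (f := q 0)
      (g := fun y : Fin d → ℝ => ∏ j, q (Fin.succAbove 0 j) (y j))
      ((hq 0).aemeasurable)
      ((Finset.measurable_prod _ fun j _ =>
        (hq _).comp (measurable_pi_apply j)).aemeasurable),
      ih (fun j => m (Fin.succAbove 0 j)) (fun j => q (Fin.succAbove 0 j))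
        (fun j => hq _),
      Fin.prod_univ_succAbove (fun i => ∫⁻ t, q i t ∂(m i)) 0]

lemma aux_lintegral_pi_coord {d : ℕ} (m : Fin d → Measure ℝ)
    [∀ i, IsProbabilityMeasure (m i)] (i : Fin d) (q : ℝ → ℝ≥0∞)
    (hq : Measurable q) :
    ∫⁻ v, q (v i) ∂(Measure.pi m) = ∫⁻ t, q t ∂(m i) := by
  classical
  have h := aux_lintegral_pi_prod m
    (Function.update (fun _ _ => (1 : ℝ≥0∞)) i q)
    (fun j => by
      rcases eq_or_ne j i with rfl | hj
      · simpa using hq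
      · simp [Function.update_of_ne hj])
  have h1 : ∀ v : Fin d → ℝ,
      (∏ j, Function.update (fun _ _ => (1 : ℝ≥0∞)) i q j (v j)) = q (v i) := by
    intro v
    have := Fintype.prod_eq_single
      (f := fun j => Function.update (fun _ _ => (1 : ℝ≥0∞)) i q j (v j)) i
      (fun j hj => by simp [Function.update_of_ne hj])
    simpa using this
  have h2 : (∏ j, ∫⁻ t, Function.update (fun _ _ => (1 : ℝ≥0∞)) i q j t ∂(m j))
      = ∫⁻ t, q t ∂(m i) := by
    have := Fintype.prod_eq_single
      (f := fun j => ∫⁻ t, Function.update (fun _ _ => (1 : ℝ≥0∞)) i q j t ∂(m j)) i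
      (fun j hj => by simp [Function.update_of_ne hj])
    simpa using this
  simp only [h1, h2] at h
  exact h

instance aux_prob_restrict : IsProbabilityMeasure
    ((volume : Measure ℝ).restrict (Icc (0:ℝ) 1)) := by
  constructor
  rw [Measure.restrict_apply_univ, Real.volume_Icc]
  norm_num

lemma aux_box_eq_pi {d : ℕ} :
    (volume : Measure (Fin d → ℝ)).restrict (Set.univ.pi fun _ => Icc (0:ℝ) 1)
      = Measure.pi (fun _ => (volume : Measure ℝ).restrict (Icc (0:ℝ) 1)) := by
  refine (Measure.pi_eq fun (s : Fin d → Set ℝ) hs => ?_).symm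
  rw [Measure.restrict_apply (MeasurableSet.univ_pi hs), ← Set.pi_inter_distrib,
    volume_pi_pi]
  exact Finset.prod_congr rfl fun i _ => (Measure.restrict_apply (hs i)).symm

lemma aux_half {Ω : Type*} [MeasurableSpace Ω] (P : Measure Ω) [IsProbabilityMeasure P]
    {d : ℕ} (X V : Fin d → Ω → ℝ)
    (hXm : ∀ i, Measurable (X i)) (hVm : ∀ i, Measurable (V i))
    (hV : Measure.map (fun ω i => V i ω) P
        = (volume : Measure (Fin d → ℝ)).restrict (Set.univ.pi fun _ => Set.Icc (0:ℝ) 1))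
    (hindep : IndepFun (fun ω i => X i ω) (fun ω i => V i ω) P)
    (W : Fin d → ℝ → ℝ → Prop)
    (hWmeas : ∀ i, MeasurableSet {p : ℝ × ℝ | W i p.1 p.2})
    (hqm : ∀ i, Measurable fun t => P {ω | W i (X i ω) t})
    (hpodW : ∀ t : Fin d → ℝ, (∀ i, t i ∈ Set.Icc (0:ℝ) 1) →
      (∏ i, P {ω | W i (X i ω) (t i)}) ≤ P {ω | ∀ i, W i (X i ω) (t i)}) :
    (∏ i, P {ω | W i (X i ω) (V i ω)}) ≤ P {ω | ∀ i, W i (X i ω) (V i ω)} := by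
  have hXvm : Measurable (fun ω i => X i ω) := measurable_pi_lambda _ hXm
  have hVvm : Measurable (fun ω i => V i ω) := measurable_pi_lambda _ hVm
  set μ : Measure (Fin d → ℝ) := P.map (fun ω i => X i ω) with hμ
  set ν : Measure (Fin d → ℝ) := P.map (fun ω i => V i ω) with hν0
  haveI : IsProbabilityMeasure μ := Measure.isProbabilityMeasure_map hXvm.aemeasurable
  haveI : IsProbabilityMeasure ν := Measure.isProbabilityMeasure_map hVvm.aemeasurable
  have hpair : P.map (fun ω => ((fun i => X i ω), (fun i => V i ω))) = μ.prod ν :=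
    (indepFun_iff_map_prod_eq_prod_map_map hXvm.aemeasurable hVvm.aemeasurable).mp hindep
  have hνpi : ν = Measure.pi (fun _ => (volume : Measure ℝ).restrict (Icc (0:ℝ) 1)) :=
    hV.trans aux_box_eq_pi
  have hWm1 : ∀ i, MeasurableSet {p : (Fin d → ℝ) × (Fin d → ℝ) | W i (p.1 i) (p.2 i)} := by
    intro i
    have hm : Measurable fun p : (Fin d → ℝ) × (Fin d → ℝ) => (p.1 i, p.2 i) :=
      ((measurable_pi_apply i).comp measurable_fst).prodMk
        ((measurable_pi_apply i).comp measurable_snd)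
    exact hm (hWmeas i)
  have hSm : MeasurableSet {p : (Fin d → ℝ) × (Fin d → ℝ) | ∀ i, W i (p.1 i) (p.2 i)} := by
    rw [Set.setOf_forall]
    exact MeasurableSet.iInter fun i => hWm1 i
  have hμslice : ∀ i (t : ℝ), μ {x : Fin d → ℝ | W i (x i) t} = P {ω | W i (X i ω) t} := by
    intro i t
    rw [hμ, Measure.map_apply hXvm]
    · rfl
    · have hm : Measurable fun x : Fin d → ℝ => (x i, t) :=
        (measurable_pi_apply i).prodMk measurable_const
      exact hm (hWmeas i)
  have hμjoint : ∀ t : Fin d → ℝ,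
      μ {x : Fin d → ℝ | ∀ i, W i (x i) (t i)} = P {ω | ∀ i, W i (X i ω) (t i)} := by
    intro t
    rw [hμ, Measure.map_apply hXvm]
    · rfl
    · rw [Set.setOf_forall]
      refine MeasurableSet.iInter fun i => ?_
      have hm : Measurable fun x : Fin d → ℝ => (x i, t i) :=
        (measurable_pi_apply i).prodMk measurable_const
      exact hm (hWmeas i)
  have hjoint : P {ω | ∀ i, W i (X i ω) (V i ω)}
      = ∫⁻ v, μ {x : Fin d → ℝ | ∀ i, W i (x i) (v i)} ∂ν := by
    have h1 : {ω | ∀ i, W i (X i ω) (V i ω)}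
        = (fun ω => ((fun i => X i ω), (fun i => V i ω))) ⁻¹'
          {p : (Fin d → ℝ) × (Fin d → ℝ) | ∀ i, W i (p.1 i) (p.2 i)} := rfl
    rw [h1, ← Measure.map_apply (hXvm.prodMk hVvm) hSm, hpair,
      Measure.prod_apply_symm hSm]
    rfl
  have hmarg : ∀ i, P {ω | W i (X i ω) (V i ω)}
      = ∫⁻ v, P {ω | W i (X i ω) (v i)} ∂ν := by
    intro i
    have h1 : {ω | W i (X i ω) (V i ω)}
        = (fun ω => ((fun i => X i ω), (fun i => V i ω))) ⁻¹'
          {p : (Fin d → ℝ) × (Fin d → ℝ) | W i (p.1 i) (p.2 i)} := rfl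
    rw [h1, ← Measure.map_apply (hXvm.prodMk hVvm) (hWm1 i), hpair,
      Measure.prod_apply_symm (hWm1 i)]
    exact lintegral_congr fun v => hμslice i (v i)
  have hae : ∀ᵐ v ∂ν, (∏ i, P {ω | W i (X i ω) (v i)})
      ≤ μ {x : Fin d → ℝ | ∀ i, W i (x i) (v i)} := by
    have hbox : ∀ᵐ v ∂ν, v ∈ Set.univ.pi fun _ : Fin d => Icc (0:ℝ) 1 := by
      rw [hV]
      exact ae_restrict_mem (MeasurableSet.univ_pi fun _ => measurableSet_Icc)
    filter_upwards [hbox] with v hv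
    rw [hμjoint v]
    exact hpodW v fun i => hv i (Set.mem_univ i)
  have hfub : (∏ i, ∫⁻ v, P {ω | W i (X i ω) (v i)} ∂ν)
      = ∫⁻ v, ∏ i, P {ω | W i (X i ω) (v i)} ∂ν := by
    rw [hνpi, aux_lintegral_pi_prod _ _ hqm]
    exact Finset.prod_congr rfl fun i _ =>
      aux_lintegral_pi_coord _ i _ (hqm i)
  calc (∏ i, P {ω | W i (X i ω) (V i ω)})
      = ∏ i, ∫⁻ v, P {ω | W i (X i ω) (v i)} ∂ν :=
        Finset.prod_congr rfl fun i _ => hmarg i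
    _ = ∫⁻ v, ∏ i, P {ω | W i (X i ω) (v i)} ∂ν := hfub
    _ ≤ ∫⁻ v, μ {x : Fin d → ℝ | ∀ i, W i (x i) (v i)} ∂ν := lintegral_mono_ae hae
    _ = P {ω | ∀ i, W i (X i ω) (V i ω)} := hjoint.symm

/-- Positive orthant dependence (POD). -/
def IsPOD {Ω : Type*} [MeasurableSpace Ω] (P : Measure Ω) {d : ℕ}
    (X : Fin d → Ω → ℝ) : Prop :=
  ∀ x : Fin d → ℝ,
    (∏ i, P {ω | X i ω ≤ x i}) ≤ P {ω | ∀ i, X i ω ≤ x i} ∧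
    (∏ i, P {ω | x i < X i ω}) ≤ P {ω | ∀ i, x i < X i ω}

theorem stmt13 {Ω : Type*} [MeasurableSpace Ω] (P : Measure Ω) [IsProbabilityMeasure P]
    {d : ℕ} (X V : Fin d → Ω → ℝ)
    (hXm : ∀ i, Measurable (X i)) (hVm : ∀ i, Measurable (V i))
    (hV : Measure.map (fun ω i => V i ω) P
        = (volume : Measure (Fin d → ℝ)).restrict (Set.univ.pi fun _ => Set.Icc (0:ℝ) 1))
    (hindep : IndepFun (fun ω i => X i ω) (fun ω i => V i ω) P)
    (F Fm : Fin d → ℝ → ℝ)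
    (hF : ∀ i x, F i x = (P {ω | X i ω ≤ x}).toReal)
    (hFm : ∀ i x, Fm i x = (P {ω | X i ω < x}).toReal)
    (U : Fin d → Ω → ℝ)
    (hU : ∀ i ω, U i ω = Fm i (X i ω) + V i ω * (F i (X i ω) - Fm i (X i ω)))
    (hPOD : IsPOD P X) :
    IsPOD P U := by
  have hFmono : ∀ i, Monotone (F i) := by
    intro i a b hab
    rw [hF, hF]
    exact ENNReal.toReal_mono (measure_ne_top P _)
      (measure_mono fun ω hω => le_trans hω hab)
  have hFmmono : ∀ i, Monotone (Fm i) := by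
    intro i a b hab
    rw [hFm, hFm]
    exact ENNReal.toReal_mono (measure_ne_top P _)
      (measure_mono fun ω hω => lt_of_lt_of_le hω hab)
  have hle : ∀ i x, Fm i x ≤ F i x := by
    intro i x
    rw [hF, hFm]
    exact ENNReal.toReal_mono (measure_ne_top P _)
      (measure_mono fun ω (hω : X i ω < x) => le_of_lt hω)
  have hkey : ∀ t : ℝ, 0 ≤ t → t ≤ 1 → ∀ i, ∀ ⦃b a : ℝ⦄, b ≤ a →
      Fm i b + t * (F i b - Fm i b) ≤ Fm i a + t * (F i a - Fm i a) := by
    intro t ht0 ht1 i b a hba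
    have m1 := mul_le_mul_of_nonneg_left (hFmono i hba) ht0
    have m2 := mul_le_mul_of_nonneg_left (hFmmono i hba) (sub_nonneg.2 ht1)
    nlinarith
  have hcnonneg : ∀ i x, (0:ℝ) ≤ F i x - Fm i x := fun i x => sub_nonneg.2 (hle i x)
  intro u
  have hGm : ∀ i, Measurable fun p : ℝ × ℝ => Fm i p.1 + p.2 * (F i p.1 - Fm i p.1) :=
    fun i => (((hFmmono i).measurable).comp measurable_fst).add
      (measurable_snd.mul ((((hFmono i).measurable).comp measurable_fst).sub
        (((hFmmono i).measurable).comp measurable_fst)))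
  constructor
  · -- lower orthant
    have h := aux_half P X V hXm hVm hV hindep
      (fun i x t => Fm i x + t * (F i x - Fm i x) ≤ u i)
      (fun i => measurableSet_le (hGm i) measurable_const)
      (fun i => by
        have hanti : Antitone fun t =>
            P {ω | Fm i (X i ω) + t * (F i (X i ω) - Fm i (X i ω)) ≤ u i} := by
          intro t t' htt'
          refine measure_mono fun ω hω => ?_
          simp only [mem_setOf_eq] at hω ⊢
          have := mul_le_mul_of_nonneg_right htt' (hcnonneg i (X i ω))
          linarith
        exact hanti.measurable)
      (fun t ht => by
        refine aux_pod_lower P X (fun c => (hPOD c).1)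
          (fun i => {s | Fm i s + t i * (F i s - Fm i s) ≤ u i}) (fun i => ?_)
        intro a b hba ha
        simp only [mem_setOf_eq] at ha ⊢
        exact le_trans (hkey (t i) (ht i).1 (ht i).2 i hba) ha)
    simp only [hU]
    exact h
  · -- upper orthant
    have h := aux_half P X V hXm hVm hV hindep
      (fun i x t => u i < Fm i x + t * (F i x - Fm i x))
      (fun i => measurableSet_lt measurable_const (hGm i))
      (fun i => by
        have hmono : Monotone fun t =>
            P {ω | u i < Fm i (X i ω) + t * (F i (X i ω) - Fm i (X i ω))} := by
          intro t t' htt'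
          refine measure_mono fun ω hω => ?_
          simp only [mem_setOf_eq] at hω ⊢
          have := mul_le_mul_of_nonneg_right htt' (hcnonneg i (X i ω))
          linarith
        exact hmono.measurable)
      (fun t ht => by
        refine aux_pod_upper P X hXm (fun c => (hPOD c).2)
          (fun i => {s | u i < Fm i s + t i * (F i s - Fm i s)}) (fun i => ?_)
        intro a b hab ha
        simp only [mem_setOf_eq] at ha ⊢
        exact lt_of_lt_of_le ha (hkey (t i) (ht i).1 (ht i).2 i hab))
    simp only [hU]
    exact h
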